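/- Suppose f, g ∈ C(X,ℝ), μ₁ and μ₂ are f-maximizing measures, and ∫ g dμ₁ > ∫ g dμ₂. Let U := {μ ∈ M : ∫ g dμ < ∫ g dμ₁}. Then U is a weak*-open subset of M with U ∩ M_max(f) ≠ ∅, and for every ε > 0 one has U ∩ M_max(f + ε·g) = ∅. -/

import Mathlib

open MeasureTheory Topology Filter
open scoped NNReal

variable {X : Type*} [MetricSpace X] [CompactSpace X] [Nonempty X]
  [MeasurableSpace X] [BorelSpace X]

/-- The set of `T`-invariant Borel probability measures on `X`,
equipped (as a subtype) with the weak* topology. -/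
def Minv (T : X → X) : Set (ProbabilityMeasure X) :=
  {μ | (μ : Measure X).map T = (μ : Measure X)}

/-- The integral of a continuous function against a probability measure. -/
noncomputable def intf (f : C(X, ℝ)) (μ : ProbabilityMeasure X) : ℝ :=
  ∫ x, f x ∂(μ : Measure X)

/-- The maximum ergodic average `β(f) = sup {∫ f dμ : μ ∈ M}`. -/
noncomputable def beta (T : X → X) (f : C(X, ℝ)) : ℝ :=
  sSup (intf f '' Minv T)

/-- The set of `f`-maximizing measures. -/
def MMax (T : X → X) (f : C(X, ℝ)) : Set (ProbabilityMeasure X) :=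
  {μ ∈ Minv T | intf f μ = beta T f}

lemma continuous_intf (h : C(X, ℝ)) : Continuous (intf h) := by
  have := MeasureTheory.ProbabilityMeasure.continuous_integral_boundedContinuousFunction
    (X := X) (BoundedContinuousFunction.mkOfCompact h)
  exact this

lemma intf_le_norm (h : C(X, ℝ)) (μ : ProbabilityMeasure X) :
    intf h μ ≤ ‖BoundedContinuousFunction.mkOfCompact h‖ := by
  have := (BoundedContinuousFunction.mkOfCompact h).norm_integral_le_norm (μ : Measure X)
  calc intf h μ ≤ |intf h μ| := le_abs_self _
    _ ≤ ‖BoundedContinuousFunction.mkOfCompact h‖ := by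
        simpa [intf, Real.norm_eq_abs] using this

lemma bddAbove_intf (T : X → X) (h : C(X, ℝ)) : BddAbove (intf h '' Minv T) := by
  refine ⟨‖BoundedContinuousFunction.mkOfCompact h‖, ?_⟩
  rintro _ ⟨μ, _, rfl⟩
  exact intf_le_norm h μ

lemma intf_le_beta (T : X → X) (h : C(X, ℝ)) {μ : ProbabilityMeasure X}
    (hμ : μ ∈ Minv T) : intf h μ ≤ beta T h :=
  le_csSup (bddAbove_intf T h) ⟨μ, hμ, rfl⟩

lemma intf_add_smul (f g : C(X, ℝ)) (ε : ℝ) (μ : ProbabilityMeasure X) :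
    intf (f + ε • g) μ = intf f μ + ε * intf g μ := by
  have hf := (BoundedContinuousFunction.mkOfCompact f).integrable (μ : Measure X)
  have hg := (BoundedContinuousFunction.mkOfCompact g).integrable (μ : Measure X)
  simp only [intf, ContinuousMap.add_apply, ContinuousMap.smul_apply, smul_eq_mul]
  rw [integral_add (by exact hf) (by exact hg.const_mul ε),
    integral_const_mul]

/-- If `μ₁, μ₂ ∈ M_max(f)` with `∫ g dμ₁ > ∫ g dμ₂`, then
`U = {μ ∈ M : ∫ g dμ < ∫ g dμ₁}` is weak*-open in `M`, meets `M_max(f)`,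
and is disjoint from `M_max(f + ε g)` for every `ε > 0`. -/
theorem open_set_meets_MMax_and_avoids_perturbed (T : X → X) (hT : Continuous T)
    (hM : (Minv T).Nonempty) (f g : C(X, ℝ)) (μ₁ μ₂ : ProbabilityMeasure X)
    (h₁ : μ₁ ∈ MMax T f) (h₂ : μ₂ ∈ MMax T f) (hg : intf g μ₂ < intf g μ₁) :
    IsOpen {μ : Minv T | intf g (μ : ProbabilityMeasure X) < intf g μ₁} ∧
    ({μ : Minv T | intf g (μ : ProbabilityMeasure X) < intf g μ₁} ∩
      {μ : Minv T | (μ : ProbabilityMeasure X) ∈ MMax T f}).Nonempty ∧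
    ∀ ε : ℝ, 0 < ε →
      {μ : Minv T | intf g (μ : ProbabilityMeasure X) < intf g μ₁} ∩
        {μ : Minv T | (μ : ProbabilityMeasure X) ∈ MMax T (f + ε • g)} = ∅ := by
  refine ⟨?_, ?_, ?_⟩
  · exact isOpen_lt ((continuous_intf g).comp continuous_subtype_val) continuous_const
  · exact ⟨⟨μ₂, h₂.1⟩, hg, h₂⟩
  · intro ε hε
    ext μ
    simp only [Set.mem_inter_iff, Set.mem_setOf_eq, Set.mem_empty_iff_false, iff_false]
    rintro ⟨hlt, hμmem, hμmax⟩
    have h1 : intf f (μ : ProbabilityMeasure X) ≤ intf f μ₁ := by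
      rw [h₁.2]; exact intf_le_beta T f hμmem
    have hlt' : intf (f + ε • g) (μ : ProbabilityMeasure X) < intf (f + ε • g) μ₁ := by
      rw [intf_add_smul, intf_add_smul]
      nlinarith
    have hle := intf_le_beta T (f + ε • g) h₁.1
    rw [hμmax] at hlt'
    linarith
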